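/- Let d be a positive integer and m ≥ 2 an integer, and set n = m^d. Then the discretization error of the corner-grid quadrature rule for the function v(x) = ∏_{k=1}^{d} x_k·sin(2π x_k) on [0,1]^d is bounded below as follows: | ∫_{[0,1]^d} ∏_{k=1}^{d} ( x_k·sin(2π x_k) ) dx − m^{-d} · Σ_{i ∈ {0,...,m−1}^d} ∏_{k=1}^{d} ( (i_k/m)·sin(2π i_k/m) ) | ≥ (2π)^{-d} · ( 1 − (1 − π²/(3m²))^d ). In particular, the discretization error of this function decays no faster than order m^{-2} = n^{-2/d} for fixed d. -/

import Mathlib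

open MeasureTheory Real Finset

lemma integral_x_sin : ∫ x in Set.Icc (0:ℝ) 1, x * Real.sin (2*π*x) = -(2*π)⁻¹ := by
  have hpi : (0:ℝ) < π := Real.pi_pos
  rw [MeasureTheory.integral_Icc_eq_integral_Ioc, ← intervalIntegral.integral_of_le zero_le_one]
  have key : ∀ x ∈ Set.uIcc (0:ℝ) 1, HasDerivAt
      (fun y : ℝ => -(y * Real.cos (2*π*y)) / (2*π) + Real.sin (2*π*y) / (2*π)^2)
      (x * Real.sin (2*π*x)) x := by
    intro x _
    have h1 : HasDerivAt (fun y : ℝ => 2*π*y) (2*π) x := by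
      simpa using (hasDerivAt_id x).const_mul (2*π)
    have hc : HasDerivAt (fun y : ℝ => Real.cos (2*π*y)) (-Real.sin (2*π*x) * (2*π)) x :=
      (Real.hasDerivAt_cos (2*π*x)).comp x h1
    have hs : HasDerivAt (fun y : ℝ => Real.sin (2*π*y)) (Real.cos (2*π*x) * (2*π)) x :=
      (Real.hasDerivAt_sin (2*π*x)).comp x h1
    have hxc : HasDerivAt (fun y : ℝ => y * Real.cos (2*π*y))
        (1 * Real.cos (2*π*x) + x * (-Real.sin (2*π*x) * (2*π))) x :=
      (hasDerivAt_id x).mul hc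
    have := ((hxc.neg.div_const (2*π)).add (hs.div_const ((2*π)^2)))
    exact this.congr_deriv (by field_simp; ring)
  rw [intervalIntegral.integral_eq_sub_of_hasDerivAt key]
  · simp [Real.cos_two_pi, Real.sin_two_pi]; field_simp
  · apply Continuous.intervalIntegrable
    continuity


lemma sin_sub_mul_cos_nonneg {x : ℝ} (h0 : 0 ≤ x) (h1 : x ≤ π) :
    0 ≤ Real.sin x - x * Real.cos x := by
  have hg : ∀ y : ℝ, HasDerivAt (fun t : ℝ => Real.sin t - t * Real.cos t) (y * Real.sin y) y := by
    intro y
    have hc : HasDerivAt (fun t : ℝ => t * Real.cos t)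
        (1 * Real.cos y + y * (-Real.sin y)) y :=
      (hasDerivAt_id y).mul (Real.hasDerivAt_cos y)
    have := (Real.hasDerivAt_sin y).sub hc
    exact this.congr_deriv (by ring)
  have hmono : MonotoneOn (fun t : ℝ => Real.sin t - t * Real.cos t) (Set.Icc 0 π) := by
    apply monotoneOn_of_deriv_nonneg (convex_Icc 0 π)
    · exact (Continuous.continuousOn (by continuity))
    · intro y _
      exact (hg y).differentiableAt.differentiableWithinAt
    · intro y hy
      rw [(hg y).deriv]
      rw [interior_Icc] at hy
      exact mul_nonneg hy.1.le (Real.sin_nonneg_of_nonneg_of_le_pi hy.1.le hy.2.le)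
  have := hmono (Set.mem_Icc.2 ⟨le_refl 0, Real.pi_pos.le⟩) (Set.mem_Icc.2 ⟨h0, h1⟩) h0
  simpa using this

lemma key_ineq {x : ℝ} (h0 : 0 ≤ x) (h1 : x ≤ π) :
    x * Real.cos x ≤ (1 - x^2/3) * Real.sin x := by
  have hf : ∀ y : ℝ, HasDerivAt (fun t : ℝ => (1 - t^2/3) * Real.sin t - t * Real.cos t)
      (y/3 * (Real.sin y - y * Real.cos y)) y := by
    intro y
    have h1' : HasDerivAt (fun t : ℝ => 1 - t^2/3) (-(2*y/3)) y := by
      have : HasDerivAt (fun t : ℝ => t^2) (2*y) y := by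
        simpa using (hasDerivAt_pow 2 y)
      simpa using ((this.div_const 3).const_sub 1)
    have ha : HasDerivAt (fun t : ℝ => (1 - t^2/3) * Real.sin t)
        ((-(2*y/3)) * Real.sin y + (1 - y^2/3) * Real.cos y) y :=
      h1'.mul (Real.hasDerivAt_sin y)
    have hb : HasDerivAt (fun t : ℝ => t * Real.cos t)
        (1 * Real.cos y + y * (-Real.sin y)) y :=
      (hasDerivAt_id y).mul (Real.hasDerivAt_cos y)
    have := ha.sub hb
    exact this.congr_deriv (by ring)
  have hmono : MonotoneOn (fun t : ℝ => (1 - t^2/3) * Real.sin t - t * Real.cos t)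
      (Set.Icc 0 π) := by
    apply monotoneOn_of_deriv_nonneg (convex_Icc 0 π)
    · exact (Continuous.continuousOn (by continuity))
    · intro y _
      exact (hf y).differentiableAt.differentiableWithinAt
    · intro y hy
      rw [(hf y).deriv]
      rw [interior_Icc] at hy
      exact mul_nonneg (by linarith [hy.1]) (sin_sub_mul_cos_nonneg hy.1.le hy.2.le)
  have := hmono (Set.mem_Icc.2 ⟨le_refl 0, Real.pi_pos.le⟩) (Set.mem_Icc.2 ⟨h0, h1⟩) h0
  simp at this
  linarith


lemma geom_weighted (z : ℂ) (M : ℕ) :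
    (z - 1) * ∑ k ∈ Finset.range M, (k : ℂ) * z ^ k
      = ((M:ℂ) - 1) * z ^ M - ∑ k ∈ Finset.range M, z ^ k + 1 := by
  induction M with
  | zero => simp
  | succ M ih =>
    rw [Finset.sum_range_succ, Finset.sum_range_succ (fun k => z ^ k)]
    push_cast
    ring_nf
    ring_nf at ih
    linear_combination ih

lemma sum_k_sin (m : ℕ) (hm : 2 ≤ m) :
    ∑ k ∈ Finset.range m, (k : ℝ) * Real.sin (2 * π * k / m)
      = -(m / 2) * (Real.cos (π / m) / Real.sin (π / m)) := by
  have hm0 : (0:ℝ) < m := by positivity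
  have hm2 : (2:ℝ) ≤ m := by exact_mod_cast hm
  have hπ := Real.pi_pos
  set θ : ℝ := π / m with hθ
  have hθpos : 0 < θ := by positivity
  have hθlt : θ ≤ π / 2 := by
    rw [hθ, div_le_div_iff₀ hm0 two_pos]
    nlinarith
  have hsθ : 0 < Real.sin θ := Real.sin_pos_of_pos_of_lt_pi hθpos (by linarith)
  set z : ℂ := Complex.exp (2 * θ * Complex.I) with hz
  have hzm : z ^ m = 1 := by
    rw [hz, ← Complex.exp_nat_mul]
    have h2 : (m:ℂ) * (2 * θ * Complex.I) = 2 * π * Complex.I := by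
      have hmC : (m:ℂ) ≠ 0 := by exact_mod_cast hm0.ne'
      rw [hθ]; push_cast; field_simp
    rw [h2, Complex.exp_two_pi_mul_I]
  have hzval : z = (Real.cos (2*θ) : ℂ) + (Real.sin (2*θ) : ℂ) * Complex.I := by
    rw [hz]
    have h3 : (2 * (θ:ℂ)) * Complex.I = ((2*θ : ℝ):ℂ) * Complex.I := by push_cast; ring
    rw [h3, Complex.exp_mul_I, ← Complex.ofReal_cos, ← Complex.ofReal_sin]
  have hz1 : z ≠ 1 := by
    intro h
    rw [hzval] at h
    have hre : Real.cos (2*θ) = 1 := by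
      have h4 := congrArg Complex.re h
      simp only [Complex.add_re, Complex.mul_re, Complex.ofReal_re, Complex.ofReal_im,
        Complex.I_re, Complex.I_im, Complex.one_re] at h4
      linarith
    have h0 : (2*θ) = 0 :=
      (Real.cos_eq_one_iff_of_lt_of_lt (by linarith) (by linarith)).1 hre
    linarith
  have hgeom : ∑ k ∈ Finset.range m, z ^ k = 0 := by
    rw [geom_sum_eq hz1, hzm]; simp
  have hS : (z - 1) * ∑ k ∈ Finset.range m, (k : ℂ) * z ^ k = m := by
    rw [geom_weighted, hzm, hgeom]; ring
  set w : ℂ := ((-(m/2) : ℝ) : ℂ) + ((-(m/2) * (Real.cos θ / Real.sin θ) : ℝ) : ℂ) * Complex.I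
    with hw
  have hkey : (z - 1) * w = m := by
    rw [hzval, hw]
    have hc2 : Real.cos (2*θ) = 1 - 2 * Real.sin θ ^ 2 := by
      rw [Real.cos_two_mul', Real.cos_sq']; ring
    have hs2 : Real.sin (2*θ) = 2 * Real.sin θ * Real.cos θ := Real.sin_two_mul θ
    rw [hc2, hs2]
    apply Complex.ext
    · simp only [Complex.add_re, Complex.sub_re, Complex.mul_re, Complex.mul_im,
        Complex.add_im, Complex.sub_im, Complex.ofReal_re, Complex.ofReal_im,
        Complex.I_re, Complex.I_im, Complex.one_re, Complex.one_im, Complex.natCast_re]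
      field_simp
      linear_combination (2*(m:ℝ)*Real.sin θ) * Real.sin_sq_add_cos_sq θ
    · simp only [Complex.add_re, Complex.sub_re, Complex.mul_re, Complex.mul_im,
        Complex.add_im, Complex.sub_im, Complex.ofReal_re, Complex.ofReal_im,
        Complex.I_re, Complex.I_im, Complex.one_re, Complex.one_im, Complex.natCast_im]
      field_simp
      ring
  have hz1' : z - 1 ≠ 0 := sub_ne_zero.2 hz1
  have hSw : ∑ k ∈ Finset.range m, (k : ℂ) * z ^ k = w :=
    mul_left_cancel₀ hz1' (hS.trans hkey.symm)
  have him := congrArg Complex.im hSw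
  rw [Complex.im_sum] at him
  have hterm : ∀ k ∈ Finset.range m, ((k : ℂ) * z ^ k).im = (k:ℝ) * Real.sin (2 * π * k / m) := by
    intro k _
    have hzk : z ^ k = Complex.exp (((2 * π * k / m : ℝ):ℂ) * Complex.I) := by
      rw [hz, ← Complex.exp_nat_mul]
      congr 1
      rw [hθ]; push_cast; field_simp
    rw [hzk, Complex.exp_mul_I, ← Complex.ofReal_cos, ← Complex.ofReal_sin]
    simp only [Complex.mul_im, Complex.add_im, Complex.add_re, Complex.mul_re,
      Complex.ofReal_re, Complex.ofReal_im, Complex.I_re, Complex.I_im,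
      Complex.natCast_re, Complex.natCast_im]
    ring
  rw [Finset.sum_congr rfl hterm] at him
  rw [him, hw]
  simp only [Complex.add_im, Complex.mul_im, Complex.ofReal_re, Complex.ofReal_im,
    Complex.I_re, Complex.I_im]
  ring


/-- Lower bound on the corner-grid discretization error of
`v(x) = ∏_k x_k·sin(2π x_k)` on `[0,1]^d`. -/
theorem cornerGrid_discretization_error_lower_bound
    (d m : ℕ) (hd : 0 < d) (hm : 2 ≤ m) (n : ℕ) (hn : n = m ^ d) :
    |(∫ x in Set.univ.pi fun _ : Fin d => Set.Icc (0:ℝ) 1,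
        ∏ k : Fin d, (x k * Real.sin (2 * π * x k))) -
      ((m : ℝ) ^ d)⁻¹ * ∑ i : Fin d → Fin m,
        ∏ k : Fin d, ((i k : ℝ) / m * Real.sin (2 * π * (i k : ℝ) / m))| ≥
    ((2 * π) ^ d)⁻¹ * (1 - (1 - π ^ 2 / (3 * m ^ 2)) ^ d) := by
  have hπ := Real.pi_pos
  have hm0 : (0:ℝ) < m := by positivity
  have hm2 : (2:ℝ) ≤ m := by exact_mod_cast hm
  set θ : ℝ := π / m with hθ
  have hθpos : 0 < θ := by positivity
  have hθlt : θ ≤ π / 2 := by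
    rw [hθ, div_le_div_iff₀ hm0 two_pos]; nlinarith
  have hsθ : 0 < Real.sin θ := Real.sin_pos_of_pos_of_lt_pi hθpos (by linarith)
  have hcθ : 0 ≤ Real.cos θ := Real.cos_nonneg_of_mem_Icc ⟨by linarith, hθlt⟩
  set c : ℝ := Real.cos θ / Real.sin θ with hc
  -- Step 1: the integral
  have hInt : (∫ x in Set.univ.pi fun _ : Fin d => Set.Icc (0:ℝ) 1,
      ∏ k : Fin d, (x k * Real.sin (2 * π * x k))) = (-(2*π)⁻¹)^d := by
    have hmeas : MeasurableSet (Set.univ.pi fun _ : Fin d => Set.Icc (0:ℝ) 1) :=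
      MeasurableSet.univ_pi fun _ => measurableSet_Icc
    rw [← MeasureTheory.integral_indicator hmeas]
    have hind : ∀ x : Fin d → ℝ,
        (Set.univ.pi fun _ : Fin d => Set.Icc (0:ℝ) 1).indicator
          (fun x => ∏ k : Fin d, (x k * Real.sin (2 * π * x k))) x
        = ∏ k : Fin d, (Set.Icc (0:ℝ) 1).indicator (fun t => t * Real.sin (2*π*t)) (x k) := by
      intro x
      by_cases hx : x ∈ Set.univ.pi fun _ : Fin d => Set.Icc (0:ℝ) 1
      · rw [Set.indicator_of_mem hx]
        refine Finset.prod_congr rfl fun k _ => ?_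
        rw [Set.indicator_of_mem (hx k (Set.mem_univ k))]
      · rw [Set.indicator_of_notMem hx]
        rw [Set.mem_univ_pi] at hx; push_neg at hx
        obtain ⟨k, hk⟩ := hx
        exact (Finset.prod_eq_zero (Finset.mem_univ k) (Set.indicator_of_notMem hk _)).symm
    simp_rw [hind]
    rw [MeasureTheory.integral_fintype_prod_volume_eq_pow (ι := Fin d)
      ((Set.Icc (0:ℝ) 1).indicator (fun t => t * Real.sin (2*π*t)))]
    rw [MeasureTheory.integral_indicator measurableSet_Icc, integral_x_sin]
    simp
  -- Step 2: the sum
  have hSum : (∑ i : Fin d → Fin m,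
      ∏ k : Fin d, ((i k : ℝ) / m * Real.sin (2 * π * (i k : ℝ) / m)))
      = (∑ j : Fin m, ((j : ℝ) / m * Real.sin (2 * π * (j : ℝ) / m)))^d :=
    (Fintype.sum_pow (fun j : Fin m => ((j : ℝ) / m * Real.sin (2 * π * (j : ℝ) / m))) d).symm
  have hA : (∑ j : Fin m, ((j : ℝ) / m * Real.sin (2 * π * (j : ℝ) / m))) = -(c/2) := by
    rw [Fin.sum_univ_eq_sum_range (fun j => ((j : ℝ) / m * Real.sin (2 * π * (j : ℝ) / m))) m]
    have h1 : ∀ k ∈ Finset.range m, ((k : ℝ) / m * Real.sin (2 * π * (k : ℝ) / m))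
        = (1/m) * ((k:ℝ) * Real.sin (2 * π * k / m)) := by
      intro k _; ring
    rw [Finset.sum_congr rfl h1, ← Finset.mul_sum, sum_k_sin m hm, hc, hθ]
    field_simp
  rw [hInt, hSum, hA]
  -- Step 3: arithmetic
  have hq : ((m:ℝ)^d)⁻¹ * (-(c/2))^d = (-(c/(2*m)))^d := by
    have hmul : (m:ℝ)⁻¹ * (-(c/2)) = -(c/(2*m)) := by ring
    rw [← inv_pow, ← mul_pow, hmul]
  rw [hq, neg_pow, neg_pow (c/(2*m)), ← mul_sub, abs_mul, abs_pow, abs_neg, abs_one,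
    one_pow, one_mul]
  have hq0 : 0 ≤ c/(2*m) := div_nonneg (div_nonneg hcθ hsθ.le) (by positivity)
  have hqb : c/(2*m) ≤ (1 - π^2/(3*m^2)) * (2*π)⁻¹ := by
    have hki := key_ineq hθpos.le (by linarith)
    have h2 : θ * Real.cos θ / Real.sin θ ≤ 1 - θ^2/3 := by
      rw [div_le_iff₀ hsθ]; linarith
    have h3 : θ^2 = π^2/m^2 := by rw [hθ]; field_simp
    have h4 : c/(2*m) = (θ * Real.cos θ / Real.sin θ) * (2*π)⁻¹ := by
      rw [hc, hθ]; field_simp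
    have h5 : 1 - π^2/(3*m^2) = 1 - θ^2/3 := by rw [h3]; ring
    rw [h5, h4]
    exact mul_le_mul_of_nonneg_right h2 (by positivity)
  have e1 : ((2*π)⁻¹ : ℝ)^d = ((2*π)^d)⁻¹ := by rw [inv_pow]
  have hqd : (c/(2*m))^d ≤ (1 - π^2/(3*m^2))^d * ((2*π)^d)⁻¹ := by
    calc (c/(2*m))^d ≤ ((1 - π^2/(3*m^2)) * (2*π)⁻¹)^d := pow_le_pow_left₀ hq0 hqb d
    _ = (1 - π^2/(3*m^2))^d * ((2*π)^d)⁻¹ := by rw [mul_pow, inv_pow]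
  rw [ge_iff_le]
  calc ((2*π)^d)⁻¹ * (1 - (1 - π^2/(3*m^2))^d)
      ≤ ((2*π)⁻¹)^d - (c/(2*m))^d := by
        rw [mul_one_sub, e1]
        have hcomm : ((2*π:ℝ)^d)⁻¹ * (1 - π^2/(3*m^2))^d
            = (1 - π^2/(3*m^2))^d * ((2*π)^d)⁻¹ := mul_comm _ _
        linarith [hqd]
    _ ≤ |((2*π)⁻¹)^d - (c/(2*m))^d| := le_abs_self _
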